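/- arXiv:2010.06797 — 2 statements merged into one kernel-verified Lean document; each statement's English description precedes it below -/
import Mathlib

section
/- For any sequence of rewards R : ℕ → ℝ and discounts γ : ℕ → ℝ with 0 ≤ R(i) ≤ 1 - r and r ≤ γ(i) ≤ 1 for all i (where 0 ≤ r ≤ 1, and at each step either R(i) = 1 - r with γ(i) = r, or R(i) = 0 with γ(i) ≤ 1), the total discounted return D = Σ_{i=0}^∞ (Π_{j=0}^{i-1} γ(j)) · R(i) satisfies 0 ≤ D ≤ 1. -/
/-- The total discounted return `D = Σ_i (Π_{j<i} γ j) * R i` of a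
reward/discount scheme with `R i ∈ [0, 1-r]`, `γ i ∈ [r, 1]`, where at each step
either `R i = 1 - r` with `γ i = r`, or `R i = 0` with `γ i ≤ 1`, satisfies `0 ≤ D ≤ 1`. -/
theorem discounted_return_in_unit_interval (R γ : ℕ → ℝ) (r : ℝ)
    (hr0 : 0 ≤ r) (hr1 : r ≤ 1)
    (hR : ∀ i, 0 ≤ R i ∧ R i ≤ 1 - r)
    (hγ : ∀ i, r ≤ γ i ∧ γ i ≤ 1)
    (hbranch : ∀ i, (R i = 1 - r ∧ γ i = r) ∨ (R i = 0 ∧ γ i ≤ 1)) :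
    0 ≤ ∑' i : ℕ, (∏ j ∈ Finset.range i, γ j) * R i ∧
      ∑' i : ℕ, (∏ j ∈ Finset.range i, γ j) * R i ≤ 1 := by
  have hγ0 : ∀ i, 0 ≤ γ i := fun i => le_trans hr0 (hγ i).1
  have hP0 : ∀ n, 0 ≤ ∏ j ∈ Finset.range n, γ j :=
    fun n => Finset.prod_nonneg fun j _ => hγ0 j
  have hterm : ∀ i, 0 ≤ (∏ j ∈ Finset.range i, γ j) * R i :=
    fun i => mul_nonneg (hP0 i) (hR i).1
  have hRγ : ∀ i, R i ≤ 1 - γ i := by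
    intro i
    rcases hbranch i with ⟨h1, h2⟩ | ⟨h1, h2⟩
    · rw [h1, h2]
    · rw [h1]; linarith
  have key : ∀ n, ∑ i ∈ Finset.range n, (∏ j ∈ Finset.range i, γ j) * R i
      ≤ 1 - ∏ j ∈ Finset.range n, γ j := by
    intro n
    induction n with
    | zero => simp
    | succ n ih =>
      rw [Finset.sum_range_succ, Finset.prod_range_succ]
      have h1 : (∏ j ∈ Finset.range n, γ j) * R n
          ≤ (∏ j ∈ Finset.range n, γ j) * (1 - γ n) :=
        mul_le_mul_of_nonneg_left (hRγ n) (hP0 n)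
      nlinarith [hP0 n]
  constructor
  · exact tsum_nonneg hterm
  · have hb : ∀ n, ∑ i ∈ Finset.range n, (∏ j ∈ Finset.range i, γ j) * R i ≤ 1 :=
      fun n => le_trans (key n) (by linarith [hP0 n])
    exact Summable.tsum_le_of_sum_range_le (summable_of_sum_range_le hterm hb) hb
end

section
/- Let a run r = q₀q₁... of the embedded automaton Ā (states augmented with frontier set T updated by f_V) visit some accepting index set F̄_i infinitely often for every i ∈ {1,...,f}. Then along the run, the frontier T is reset (i.e., becomes empty and is reinitialized) infinitely often, equivalently there are infinitely many complete 'rounds' in which every accepting set F₁,...,F_f of the base automaton is visited. -/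
open scoped Classical

/-- Tracking-frontier update: remove from `T` all indices `j` whose accepting set `F j`
contains the current state; if this would empty a nonempty visit, reset to all indices
minus the just-visited ones. -/
noncomputable def trackFrontier {Q ι : Type*} (F : ι → Set Q) (q : Q) (T : Set ι) : Set ι :=
  if (T \ {j | q ∈ F j}) = ∅ ∧ {j | q ∈ F j}.Nonempty then Set.univ \ {j | q ∈ F j}
  else T \ {j | q ∈ F j}

/-- Frontier sequence along a run: `T₀ = F` (all indices), `T_{n+1} = f_V(q_{n+1}, T_n)`. -/
noncomputable def frontierSeq {Q ι : Type*} (F : ι → Set Q) (run : ℕ → Q) : ℕ → Set ι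
  | 0 => Set.univ
  | n + 1 => trackFrontier F (run (n + 1)) (frontierSeq F run n)

/-- If a run of the embedded automaton visits every embedded accepting set
`F̄_i = {(q,T) : q ∈ F i ∧ i ∈ T}` infinitely often, then the frontier is reset infinitely
often, i.e. there are infinitely many steps at which the reset branch of `f_V` fires
(the frontier would become empty at an accepting state); equivalently, infinitely many
complete rounds in which every accepting set is visited. -/
theorem infinitely_many_frontier_resets {Q ι : Type*} [Fintype ι] [Nonempty ι]
    (F : ι → Set Q) (q : ℕ → Q)
    (hacc : ∀ i, {n : ℕ | q (n + 1) ∈ F i ∧ i ∈ frontierSeq F q n}.Infinite) :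
    {n : ℕ | (frontierSeq F q n \ {j | q (n + 1) ∈ F j}) = ∅ ∧
      {j | q (n + 1) ∈ F j}.Nonempty}.Infinite := by
  by_contra hfin
  rw [Set.not_infinite] at hfin
  obtain ⟨N, hN⟩ := hfin.bddAbove
  -- beyond N, no resets, so frontier is monotone decreasing
  have hstep : ∀ n, n > N → frontierSeq F q (n + 1) =
      frontierSeq F q n \ {j | q (n + 1) ∈ F j} := by
    intro n hn
    have hnot : ¬ ((frontierSeq F q n \ {j | q (n + 1) ∈ F j}) = ∅ ∧
        {j | q (n + 1) ∈ F j}.Nonempty) := by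
      intro h
      exact absurd (hN h) (not_le.mpr hn)
    simp only [frontierSeq, trackFrontier, if_neg hnot]
  have hmono : ∀ a b, N < a → a ≤ b → frontierSeq F q b ⊆ frontierSeq F q a := by
    intro a b ha hab
    induction b with
    | zero => omega
    | succ b ih =>
      rcases Nat.lt_or_ge a (b + 1) with h | h
      · have hb : a ≤ b := by omega
        refine subset_trans ?_ (ih hb)
        rw [hstep b (by omega)]
        exact Set.diff_subset
      · have : a = b + 1 := by omega
        subst this; exact subset_rfl
  obtain ⟨i⟩ := ‹Nonempty ι›
  have h1 : ∃ n > N, q (n + 1) ∈ F i ∧ i ∈ frontierSeq F q n := by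
    obtain ⟨n, hn1, hn2⟩ := (hacc i).exists_gt N
    exact ⟨n, hn2, hn1⟩
  obtain ⟨a, haN, haF, haT⟩ := h1
  obtain ⟨b, hb1, hb2⟩ := (hacc i).exists_gt a
  have hiTb : i ∈ frontierSeq F q b := hb1.2
  have : frontierSeq F q b ⊆ frontierSeq F q (a + 1) :=
    hmono (a + 1) b (by omega) (by omega)
  have : i ∈ frontierSeq F q (a + 1) := this hiTb
  rw [hstep a haN] at this
  exact this.2 haF
end
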